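/- Strongly convex single-epoch recursion: in stochastic value mirror descent with stepsizes η_t = 2/(μ(t+1)) and auxiliary proxy values V̄_t satisfying V̄_{t+1}(s) ≤ ⟨c(s,·)+γP_sV̄_t, π_{t+1}(·|s)⟩ + h(π_{t+1}(·|s)), the following holds componentwise: (V̄_T − V*) + ∑_{t=1}^{T-1}(I − γP_{π*})(V̄_t − V*) + (μ(T+2)/2) D_{π_T}^{π*} ≤ μ D_{π_0}^{π*} + γP_{π*}(V̄_0 − V*) + (2/μ) ∑_{t=0}^{T-1} ‖Q̃^t − Q̄^t‖_max² · 1, where Q̃^t(s,·) = c(s,·)+γP̃_s^t V_t and Q̄^t(s,·) = c(s,·)+γP_s V̄_t. -/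

import Mathlib

/-- The policy Bellman operator `(Γ_π V)(s) = ⟨c(s,·) + γ P_s V, π(·|s)⟩ + h(π(·|s))`. -/
noncomputable def Bellman {S A : Type*} [Fintype S] [Fintype A]
    (c : S → A → ℝ) (P : S → A → S → ℝ) (h : (A → ℝ) → ℝ) (γ : ℝ)
    (π : S → A → ℝ) (V : S → ℝ) (s : S) : ℝ :=
  (∑ a, π s a * (c s a + γ * ∑ s', P s a s' * V s')) + h (π s)


set_option maxHeartbeats 1000000 in
lemma svmd_key_aux {A : Type*} [Fintype A] (μ et N : ℝ) (hμ : 0 < μ) (het : 0 < et)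
    (hetle : et ≤ 2/μ)
    (q δ p0 p1 ps : A → ℝ)
    (D01 D0 D1 : ℝ)
    (hD01 : (∑ a, |p0 a - p1 a|) ^ 2 / 2 ≤ D01)
    (hD0 : (∑ a, |p0 a - ps a|) ^ 2 / 2 ≤ D0)
    (hNb : ∀ a, |δ a| ≤ N)
    (vnext vstar gterm hp1v hpsv : ℝ)
    (hthree : et * ((∑ a, (q a + δ a) * (p1 a - ps a)) + hp1v - hpsv) + D01
        ≤ D0 - (1 + et * μ) * D1)
    (hproxy : vnext ≤ (∑ a, p1 a * q a) + hp1v)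
    (hopt : (∑ a, ps a * q a) + hpsv = vstar + gterm) :
    vnext - vstar - gterm ≤ (1/et + μ/2) * D0 - (1/et + μ) * D1 + (2/μ) * N ^ 2 := by
  obtain ⟨SB, hSBdef⟩ : ∃ x, x = ∑ a, q a * (p1 a - ps a) := ⟨_, rfl⟩
  obtain ⟨Ea, hEadef⟩ : ∃ x, x = ∑ a, δ a * (p1 a - p0 a) := ⟨_, rfl⟩
  obtain ⟨Eb, hEbdef⟩ : ∃ x, x = ∑ a, δ a * (p0 a - ps a) := ⟨_, rfl⟩
  obtain ⟨L, hLdef⟩ : ∃ x, x = ∑ a, |p0 a - p1 a| := ⟨_, rfl⟩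
  obtain ⟨M, hMdef⟩ : ∃ x, x = ∑ a, |p0 a - ps a| := ⟨_, rfl⟩
  rw [← hLdef] at hD01
  rw [← hMdef] at hD0
  rw [show (∑ a, (q a + δ a) * (p1 a - ps a)) = (∑ a, q a * (p1 a - ps a)) + (∑ a, δ a * (p1 a - p0 a)) + ∑ a, δ a * (p0 a - ps a) from by
    rw [← Finset.sum_add_distrib, ← Finset.sum_add_distrib]
    exact Finset.sum_congr rfl fun a _ => by ring, ← hSBdef, ← hEadef, ← hEbdef] at hthree
  have hEaL : -(N * L) ≤ Ea := by
    have hterm : ∀ a ∈ Finset.univ, -(N * |p0 a - p1 a|) ≤ δ a * (p1 a - p0 a) := by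
      intro a _
      have h1 : |δ a * (p1 a - p0 a)| ≤ N * |p0 a - p1 a| := by
        rw [abs_mul, abs_sub_comm (p1 a)]
        exact mul_le_mul_of_nonneg_right (hNb a) (abs_nonneg _)
      linarith [neg_abs_le (δ a * (p1 a - p0 a))]
    calc -(N * L) = ∑ a, -(N * |p0 a - p1 a|) := by
          rw [hLdef, Finset.mul_sum, Finset.sum_neg_distrib]
      _ ≤ Ea := hEadef ▸ Finset.sum_le_sum hterm
  have hEbM : -(N * M) ≤ Eb := by
    have hterm : ∀ a ∈ Finset.univ, -(N * |p0 a - ps a|) ≤ δ a * (p0 a - ps a) := by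
      intro a _
      have h1 : |δ a * (p0 a - ps a)| ≤ N * |p0 a - ps a| := by
        rw [abs_mul]
        exact mul_le_mul_of_nonneg_right (hNb a) (abs_nonneg _)
      linarith [neg_abs_le (δ a * (p0 a - ps a))]
    calc -(N * M) = ∑ a, -(N * |p0 a - ps a|) := by
          rw [hMdef, Finset.mul_sum, Finset.sum_neg_distrib]
      _ ≤ Eb := hEbdef ▸ Finset.sum_le_sum hterm
  have hya : -((et^2/2) * N^2) - D01 ≤ et * Ea := by
    nlinarith [mul_le_mul_of_nonneg_left hEaL het.le, sq_nonneg (et * N - L), hD01]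
  have hyb : -(et * ((1/μ) * N^2)) - et * ((μ/2) * D0) ≤ et * Eb := by
    have h4 : μ * (N * M) ≤ N^2 + (μ^2/2) * D0 := by
      nlinarith [sq_nonneg (2 * N - μ * M), mul_le_mul_of_nonneg_left hD0 (sq_nonneg μ)]
    have h5 : N * M ≤ (1/μ) * N^2 + (μ/2) * D0 := by
      rw [← mul_le_mul_iff_right₀ hμ]
      have he : μ * ((1/μ) * N^2 + (μ/2) * D0) = N^2 + (μ^2/2) * D0 := by
        field_simp
      rw [he]; exact h4
    have h6 : -((1/μ) * N^2 + (μ/2) * D0) ≤ Eb := by linarith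
    have h7 := mul_le_mul_of_nonneg_left h6 het.le
    nlinarith [h7]
  have hth2 : et * (SB + hp1v - hpsv) + et * Ea + et * Eb + D01 ≤ D0 - (1 + et * μ) * D1 := by
    nlinarith [hthree]
  have hSB : SB = (∑ a, p1 a * q a) - ∑ a, ps a * q a := by
    rw [hSBdef, ← Finset.sum_sub_distrib]
    exact Finset.sum_congr rfl fun a _ => by ring
  have hval : et * (vnext - vstar - gterm) ≤ et * (SB + hp1v - hpsv) := by
    have h7 : vnext - vstar - gterm ≤ SB + hp1v - hpsv := by linarith
    exact mul_le_mul_of_nonneg_left h7 het.le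
  rw [← mul_le_mul_iff_right₀ het]
  have e0 : et * ((1/et + μ/2) * D0 - (1/et + μ) * D1 + 2/μ * N^2)
      = et * ((1/et + μ/2) * D0) - et * ((1/et + μ) * D1) + et * ((2/μ) * N^2) := by ring
  have hinv : et * (1/et) = 1 := mul_one_div_cancel het.ne'
  have e1 : et * ((1/et + μ/2) * D0) = D0 + et * (μ/2) * D0 := by
    linear_combination D0 * hinv
  have e2 : et * ((1/et + μ) * D1) = D1 + et * μ * D1 := by
    linear_combination D1 * hinv
  have e3 : et * ((et/2) * N^2) + et * ((1/μ) * N^2) ≤ et * ((2/μ) * N^2) := by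
    have h8 : et/2 ≤ 1/μ := by
      have h9 := (le_div_iff₀ hμ).mp hetle
      rw [div_le_div_iff₀ (by norm_num : (0:ℝ) < 2) hμ]
      linarith
    have h10 := mul_le_mul_of_nonneg_right (mul_le_mul_of_nonneg_left h8 het.le) (sq_nonneg N)
    ring_nf at h10 ⊢
    linarith [h10]
  ring_nf at hval hth2 hya hyb e1 e2 e3 ⊢
  linarith [hval, hth2, hya, hyb, e1, e2, e3]


/-- Strongly convex single-epoch recursion for stochastic value mirror
descent. With stepsizes `η_t = 2/(μ(t+1))`, a `μ`-strongly convex regularizer `h`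
relative to the Bregman divergence `D` of the ℓ₁-norm (`D(x,y) ≥ ‖x−y‖₁²/2`), the
per-step three-point inequality, and proxy values `V̄` satisfying
`V̄_{t+1}(s) ≤ ⟨c(s,·)+γP_sV̄_t, π_{t+1}(·|s)⟩ + h(π_{t+1}(·|s))`, the following holds
componentwise:
`(V̄_T − V*) + ∑_{t=1}^{T-1}(I − γP_{π*})(V̄_t − V*) + (μ(T+2)/2) D_{π_T}^{π*}
  ≤ μ D_{π_0}^{π*} + γP_{π*}(V̄_0 − V*) + (2/μ) ∑_{t=0}^{T-1} ‖Q̃^t − Q̄^t‖²_max · 1`,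
where `Q̄^t(s,·) = c(s,·) + γP_s V̄_t`. -/
theorem svmd_strongly_convex_single_epoch
    {S A : Type*} [Fintype S] [Fintype A]
    (γ : ℝ) (hγ0 : 0 < γ) (hγ1 : γ < 1)
    (μ : ℝ) (hμ : 0 < μ)
    (c : S → A → ℝ) (P : S → A → S → ℝ)
    (hP0 : ∀ s a s', 0 ≤ P s a s') (hP1 : ∀ s a, ∑ s', P s a s' = 1)
    (h : (A → ℝ) → ℝ)
    (D : (A → ℝ) → (A → ℝ) → ℝ)
    (hD1 : ∀ x y : A → ℝ, (∑ a, |x a - y a|) ^ 2 / 2 ≤ D x y)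
    (T : ℕ) (hT : 1 ≤ T)
    (η : ℕ → ℝ) (hη : ∀ t, η t = 2 / (μ * ((t : ℝ) + 1)))
    (π : ℕ → S → A → ℝ) (hπ : ∀ t s, π t s ∈ stdSimplex ℝ A)
    (Qtil : ℕ → S → A → ℝ)
    (Vbar : ℕ → S → ℝ)
    (hthree : ∀ t < T, ∀ s, ∀ p ∈ stdSimplex ℝ A,
      η t * ((∑ a, Qtil t s a * (π (t + 1) s a - p a)) + h (π (t + 1) s) - h p)
          + D (π t s) (π (t + 1) s)
        ≤ D (π t s) p - (1 + η t * μ) * D (π (t + 1) s) p)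
    (hproxy : ∀ t < T, ∀ s,
      Vbar (t + 1) s
        ≤ (∑ a, π (t + 1) s a * (c s a + γ * ∑ s', P s a s' * Vbar t s'))
            + h (π (t + 1) s))
    (πstar : S → A → ℝ) (hπstar : ∀ s, πstar s ∈ stdSimplex ℝ A)
    (Vstar : S → ℝ) (hVstar : ∀ s, Vstar s = Bellman c P h γ πstar Vstar s) :
    ∀ s,
      (Vbar T s - Vstar s)
        + (∑ t ∈ Finset.Ico 1 T, ((Vbar t s - Vstar s)
            - γ * ∑ s', (∑ a, πstar s a * P s a s') * (Vbar t s' - Vstar s')))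
        + (μ * ((T : ℝ) + 2) / 2) * D (π T s) (πstar s)
      ≤ μ * D (π 0 s) (πstar s)
        + γ * ∑ s', (∑ a, πstar s a * P s a s') * (Vbar 0 s' - Vstar s')
        + (2 / μ) * ∑ t ∈ Finset.range T,
            ‖(fun s a => Qtil t s a - (c s a + γ * ∑ s', P s a s' * Vbar t s')
              : S → A → ℝ)‖ ^ 2 := by
  have hVstar' : ∀ s, Vstar s = (∑ a, πstar s a * (c s a + γ * ∑ s', P s a s' * Vstar s')) + h (πstar s) := fun s => by
    simpa [Bellman] using hVstar s
  intro s
  -- per-step key inequality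
  have key : ∀ t, t < T →
      (Vbar (t+1) s - Vstar s)
          - γ * ∑ s', (∑ a, πstar s a * P s a s') * (Vbar t s' - Vstar s')
        ≤ μ * ((t:ℝ) + 2) / 2 * D (π t s) (πstar s)
            - μ * ((t:ℝ) + 3) / 2 * D (π (t+1) s) (πstar s)
            + (2/μ) * ‖(fun s a => Qtil t s a - (c s a + γ * ∑ s', P s a s' * Vbar t s')
                : S → A → ℝ)‖ ^ 2 := by
    intro t ht
    have htnn : (0:ℝ) ≤ (t:ℝ) := Nat.cast_nonneg t
    have hNb : ∀ a, |Qtil t s a - (c s a + γ * ∑ s', P s a s' * Vbar t s')|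
        ≤ ‖(fun s a => Qtil t s a - (c s a + γ * ∑ s', P s a s' * Vbar t s') : S → A → ℝ)‖ := by
      intro a
      have h1 := norm_le_pi_norm
        (fun s a => Qtil t s a - (c s a + γ * ∑ s', P s a s' * Vbar t s') : S → A → ℝ) s
      have h2 := norm_le_pi_norm
        ((fun s a => Qtil t s a - (c s a + γ * ∑ s', P s a s' * Vbar t s') : S → A → ℝ) s) a
      simpa [Real.norm_eq_abs] using h2.trans h1
    have hetpos : 0 < η t := by rw [hη]; positivity
    have hetle : η t ≤ 2/μ := by
      rw [hη]
      apply div_le_div_of_nonneg_left (by norm_num) hμ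
      nlinarith
    -- optimality equality
    have hinner : ∀ a, (∑ s', P s a s' * (Vbar t s' - Vstar s'))
        = (∑ s', P s a s' * Vbar t s') - ∑ s', P s a s' * Vstar s' := by
      intro a
      rw [← Finset.sum_sub_distrib]
      exact Finset.sum_congr rfl fun _ _ => by ring
    have hG : γ * (∑ s', (∑ a, πstar s a * P s a s') * (Vbar t s' - Vstar s'))
        = ∑ a, πstar s a * (γ * ∑ s', P s a s' * (Vbar t s' - Vstar s')) := by
      simp only [Finset.mul_sum, Finset.sum_mul]
      rw [Finset.sum_comm]
      exact Finset.sum_congr rfl fun a _ => Finset.sum_congr rfl fun s' _ => by ring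
    have hopt : (∑ a, πstar s a * (c s a + γ * ∑ s', P s a s' * Vbar t s')) + h (πstar s)
        = Vstar s + γ * (∑ s', (∑ a, πstar s a * P s a s') * (Vbar t s' - Vstar s')) := by
      rw [hG]
      have hsp : ∀ a ∈ Finset.univ, πstar s a * (c s a + γ * ∑ s', P s a s' * Vbar t s')
          = πstar s a * (c s a + γ * ∑ s', P s a s' * Vstar s')
            + πstar s a * (γ * ∑ s', P s a s' * (Vbar t s' - Vstar s')) := by
        intro a _
        rw [hinner a]; ring
      rw [Finset.sum_congr rfl hsp, Finset.sum_add_distrib]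
      linarith [hVstar' s]
    -- three-point inequality with the split sum
    have hth := hthree t ht s (πstar s) (hπstar s)
    rw [show (∑ a, Qtil t s a * (π (t + 1) s a - πstar s a))
        = ∑ a, ((c s a + γ * ∑ s', P s a s' * Vbar t s')
            + (Qtil t s a - (c s a + γ * ∑ s', P s a s' * Vbar t s')))
          * (π (t + 1) s a - πstar s a) from
      Finset.sum_congr rfl fun a _ => by ring] at hth
    have haux := svmd_key_aux μ (η t)
      ‖(fun s a => Qtil t s a - (c s a + γ * ∑ s', P s a s' * Vbar t s') : S → A → ℝ)‖
      hμ hetpos hetle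
      (fun a => c s a + γ * ∑ s', P s a s' * Vbar t s')
      (fun a => Qtil t s a - (c s a + γ * ∑ s', P s a s' * Vbar t s'))
      (π t s) (π (t+1) s) (πstar s)
      (D (π t s) (π (t+1) s)) (D (π t s) (πstar s)) (D (π (t+1) s) (πstar s))
      (hD1 _ _) (hD1 _ _) hNb
      (Vbar (t+1) s) (Vstar s)
      (γ * ∑ s', (∑ a, πstar s a * P s a s') * (Vbar t s' - Vstar s'))
      (h (π (t+1) s)) (h (πstar s))
      hth (hproxy t ht s) hopt
    have hc1 : 1/(η t) + μ/2 = μ * ((t:ℝ) + 2) / 2 := by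
      rw [hη]
      rw [one_div_div]
      ring
    have hc2 : 1/(η t) + μ = μ * ((t:ℝ) + 3) / 2 := by
      rw [hη, one_div_div]
      ring
    rw [hc1, hc2] at haux
    linarith [haux]
  obtain ⟨F, hF⟩ : ∃ F : ℕ → ℝ, F = fun t : ℕ => μ * ((t:ℝ) + 2) / 2 * D (π t s) (πstar s) :=
    ⟨_, rfl⟩
  have key' : ∀ t ∈ Finset.range T,
      (Vbar (t+1) s - Vstar s)
          - γ * ∑ s', (∑ a, πstar s a * P s a s') * (Vbar t s' - Vstar s')
        ≤ (F t - F (t+1))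
            + (2/μ) * ‖(fun s a => Qtil t s a - (c s a + γ * ∑ s', P s a s' * Vbar t s')
                : S → A → ℝ)‖ ^ 2 := by
    intro t ht'
    have h1 := key t (Finset.mem_range.mp ht')
    have hF1 : F t = μ * ((t:ℝ) + 2) / 2 * D (π t s) (πstar s) := by rw [hF]
    have hF2 : F (t+1) = μ * ((t:ℝ) + 3) / 2 * D (π (t+1) s) (πstar s) := by
      simp only [hF]; push_cast; ring
    linarith
  have hsum := Finset.sum_le_sum key'
  rw [Finset.sum_add_distrib, Finset.sum_range_sub' F, ← Finset.mul_sum] at hsum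
  have hL : ∑ t ∈ Finset.range T,
      ((Vbar (t+1) s - Vstar s)
          - γ * ∑ s', (∑ a, πstar s a * P s a s') * (Vbar t s' - Vstar s'))
      = ((Vbar T s - Vstar s) + ∑ t ∈ Finset.Ico 1 T, (Vbar t s - Vstar s))
        - ((γ * ∑ s', (∑ a, πstar s a * P s a s') * (Vbar 0 s' - Vstar s'))
            + ∑ t ∈ Finset.Ico 1 T,
                γ * ∑ s', (∑ a, πstar s a * P s a s') * (Vbar t s' - Vstar s')) := by
    rw [Finset.sum_sub_distrib]
    congr 1
    · have h2 : ∑ t ∈ Finset.Ico 1 (T+1), (Vbar t s - Vstar s)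
          = ∑ t ∈ Finset.range T, (Vbar (t+1) s - Vstar s) := by
        rw [Finset.sum_Ico_eq_sum_range]
        simp only [Nat.add_sub_cancel]
        exact Finset.sum_congr rfl fun i _ => by rw [add_comm]
      rw [← h2, Finset.sum_Ico_succ_top hT]
      ring
    · rw [Finset.range_eq_Ico, Finset.sum_eq_sum_Ico_succ_bot (by omega : 0 < T)]
  have hIco : ∑ t ∈ Finset.Ico 1 T, ((Vbar t s - Vstar s)
        - γ * ∑ s', (∑ a, πstar s a * P s a s') * (Vbar t s' - Vstar s'))
      = (∑ t ∈ Finset.Ico 1 T, (Vbar t s - Vstar s))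
        - ∑ t ∈ Finset.Ico 1 T,
            γ * ∑ s', (∑ a, πstar s a * P s a s') * (Vbar t s' - Vstar s') :=
    Finset.sum_sub_distrib _ _
  have hF0 : F 0 = μ * D (π 0 s) (πstar s) := by rw [hF]; norm_num
  have hFT : F T = μ * ((T:ℝ) + 2) / 2 * D (π T s) (πstar s) := by rw [hF]
  rw [hL] at hsum
  linarith [hsum]
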